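/- For every continuous f : [0,1] → ℝ, P_t f converges to f uniformly on [0,1] as t → 0+; that is, sup_{x∈[0,1]} |P_t f(x) − f(x)| → 0 as t ↓ 0 (strong continuity of the Neumann heat semigroup on C([0,1])). -/

import Mathlib

open MeasureTheory Real

/-- Centered Gaussian density with variance `t`. -/
noncomputable def gaussD (t x : ℝ) : ℝ :=
  (2 * Real.pi * t) ^ (-(1:ℝ)/2) * Real.exp (-x ^ 2 / (2 * t))

/-- The Neumann heat kernel on `[0,1]` (transition density of reflected BM). -/
noncomputable def heatK (t x y : ℝ) : ℝ :=
  ∑' n : ℤ, (gaussD t (x - y + 2 * (n : ℝ)) + gaussD t (x + y + 2 * (n : ℝ)))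

/-- The Neumann heat semigroup: `P_t f(x) = ∫₀¹ p(t,x,y) f(y) dy` for `t > 0`,
and `P_0 f = f`. -/
noncomputable def Pt (t : ℝ) (f : ℝ → ℝ) (x : ℝ) : ℝ :=
  if t = 0 then f x else ∫ y in (0:ℝ)..1, heatK t x y * f y

/-- Folding map: even, 2-periodic, identity on `[0,1]`. -/
noncomputable def phi (u : ℝ) : ℝ := 2 * |u / 2 - round (u / 2)|

lemma phi_nonneg (u : ℝ) : 0 ≤ phi u := by
  unfold phi; positivity

lemma phi_le (u : ℝ) (n : ℤ) : phi u ≤ |u - 2 * n| := by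
  have h := round_le (u / 2) n
  have : |u - 2 * n| = 2 * |u / 2 - n| := by
    rw [show u - 2 * n = 2 * (u / 2 - (n:ℝ)) by ring, abs_mul, abs_two]
  rw [this, phi]; linarith

lemma phi_eq (u : ℝ) : ∃ n : ℤ, phi u = |u - 2 * n| := by
  refine ⟨round (u / 2), ?_⟩
  rw [show u - 2 * (round (u/2) : ℝ) = 2 * (u / 2 - round (u/2)) by ring, abs_mul, abs_two, phi]

lemma phi_le_one (u : ℝ) : phi u ≤ 1 := by
  have := abs_sub_round (u / 2)
  rw [phi]; linarith

lemma phi_mem (u : ℝ) : phi u ∈ Set.Icc (0:ℝ) 1 := ⟨phi_nonneg u, phi_le_one u⟩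

lemma phi_lipschitz (a b : ℝ) : |phi a - phi b| ≤ |a - b| := by
  rw [abs_sub_le_iff]
  constructor
  · obtain ⟨n, hn⟩ := phi_eq b
    have h1 : phi a ≤ |a - 2 * n| := phi_le a n
    have h2 : |a - 2 * n| ≤ |a - b| + |b - 2 * n| := by
      have := abs_sub_abs_le_abs_sub (a - 2 * n) (b - 2 * n)
      calc |a - 2 * (n:ℝ)| ≤ |b - 2 * n| + |(a - 2*n) - (b - 2*n)| := by
            have := abs_sub (a - 2 * (n:ℝ)) (b - 2 * (n:ℝ))
            have h3 : |(a - 2*(n:ℝ)) - (b - 2*n)| + |b - 2*n| ≥ |a - 2*(n:ℝ)| := by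
              calc |a - 2*(n:ℝ)| = |((a - 2*(n:ℝ)) - (b - 2*n)) + (b - 2*n)| := by ring_nf
                _ ≤ |(a - 2*(n:ℝ)) - (b - 2*n)| + |b - 2*n| := abs_add_le _ _
            linarith
        _ = |a - b| + |b - 2 * n| := by ring_nf
    linarith
  · obtain ⟨n, hn⟩ := phi_eq a
    have h1 : phi b ≤ |b - 2 * n| := phi_le b n
    have h2 : |b - 2 * n| ≤ |a - b| + |a - 2 * n| := by
      calc |b - 2*(n:ℝ)| = |((b - 2*(n:ℝ)) - (a - 2*n)) + (a - 2*n)| := by ring_nf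
        _ ≤ |(b - 2*(n:ℝ)) - (a - 2*n)| + |a - 2*n| := abs_add_le _ _
        _ = |a - b| + |a - 2*n| := by rw [show (b - 2*(n:ℝ)) - (a - 2*n) = -(a - b) by ring, abs_neg]
    linarith

lemma phi_of_mem {u : ℝ} (h : u ∈ Set.Icc (0:ℝ) 1) : phi u = u := by
  obtain ⟨h0, h1⟩ := h
  refine le_antisymm ?_ ?_
  · have := phi_le u 0
    simpa [abs_of_nonneg h0] using this
  · obtain ⟨n, hn⟩ := phi_eq u
    rw [hn]
    rcases le_or_gt (n:ℝ) 0 with hle | hlt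
    · calc u ≤ u - 2 * n := by linarith
        _ ≤ |u - 2 * n| := le_abs_self _
    · have : (1:ℝ) ≤ n := by exact_mod_cast hlt
      calc u ≤ 2 * n - u := by linarith
        _ = -(u - 2 * n) := by ring
        _ ≤ |u - 2 * n| := neg_le_abs _

lemma phi_add_two_int (u : ℝ) (n : ℤ) : phi (u + 2 * n) = phi u := by
  refine le_antisymm ?_ ?_
  · obtain ⟨m, hm⟩ := phi_eq u
    calc phi (u + 2 * n) ≤ |u + 2 * n - 2 * ((m + n : ℤ) : ℝ)| := phi_le _ _
      _ = |u - 2 * m| := by push_cast; ring_nf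
      _ = phi u := hm.symm
  · obtain ⟨k, hk⟩ := phi_eq (u + 2 * n)
    calc phi u ≤ |u - 2 * ((k - n : ℤ) : ℝ)| := phi_le _ _
      _ = |u + 2 * n - 2 * k| := by push_cast; ring_nf
      _ = phi (u + 2 * n) := hk.symm

lemma phi_neg (u : ℝ) : phi (-u) = phi u := by
  have key : ∀ v : ℝ, phi (-v) ≤ phi v := by
    intro v
    obtain ⟨m, hm⟩ := phi_eq v
    calc phi (-v) ≤ |-v - 2 * ((-m : ℤ) : ℝ)| := phi_le _ _
      _ = |-(v - 2 * m)| := by push_cast; ring_nf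
      _ = |v - 2 * m| := abs_neg _
      _ = phi v := hm.symm
  refine le_antisymm (key u) ?_
  have := key (-u)
  rwa [neg_neg] at this

lemma continuous_phi : Continuous phi := by
  rw [Metric.continuous_iff]
  intro b ε hε
  exact ⟨ε, hε, fun a hab => lt_of_le_of_lt (by rw [Real.dist_eq, Real.dist_eq] at *; exact phi_lipschitz a b) hab⟩

section Gauss

variable {t : ℝ} (ht : 0 < t)

lemma two_pi_t_pos (ht : 0 < t) : 0 < 2 * π * t := by positivity

lemma gaussD_eq (ht : 0 < t) (x : ℝ) :
    gaussD t x = (Real.sqrt (2 * π * t))⁻¹ * Real.exp (-(2*t)⁻¹ * x ^ 2) := by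
  rw [gaussD, Real.sqrt_eq_rpow, ← Real.rpow_neg_one, ← Real.rpow_natCast _, ← Real.rpow_mul (by positivity)]
  norm_num
  left
  field_simp

lemma gaussD_nonneg (ht : 0 < t) (x : ℝ) : 0 ≤ gaussD t x := by
  rw [gaussD_eq ht]; positivity

lemma continuous_gaussD (t : ℝ) : Continuous (gaussD t) := by
  unfold gaussD; fun_prop

lemma integrable_gaussD (ht : 0 < t) : Integrable (gaussD t) := by
  have h : Integrable (fun x : ℝ => Real.exp (-(2*t)⁻¹ * x ^ 2)) :=
    integrable_exp_neg_mul_sq (by positivity)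
  have := h.const_mul (Real.sqrt (2 * π * t))⁻¹
  refine this.congr ?_
  filter_upwards with x
  rw [gaussD_eq ht]

lemma integral_gaussD (ht : 0 < t) : ∫ u, gaussD t u = 1 := by
  have : (∫ u, gaussD t u) = (Real.sqrt (2 * π * t))⁻¹ * ∫ x : ℝ, Real.exp (-(2*t)⁻¹ * x ^ 2) := by
    rw [← MeasureTheory.integral_const_mul]
    exact integral_congr_ae (by filter_upwards with x; rw [gaussD_eq ht])
  rw [this, integral_gaussian]
  have h1 : π / (2*t)⁻¹ = 2 * π * t := by field_simp
  rw [h1, inv_mul_cancel₀ (by positivity)]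

end Gauss

section CoV

lemma partition_disjoint (x : ℝ) :
    Pairwise (Function.onFun Disjoint (fun n : ℤ => Set.Ioc (x + 2*n - 1) (x + 2*n + 1))) := by
  intro m n hmn
  rw [Function.onFun, Set.disjoint_left]
  intro u hu1 hu2
  obtain ⟨a1, a2⟩ := hu1
  obtain ⟨b1, b2⟩ := hu2
  apply hmn
  have h1 : (m:ℝ) < n + 1 := by linarith
  have h2 : (n:ℝ) < m + 1 := by linarith
  have h1' : m < n + 1 := by exact_mod_cast h1
  have h2' : n < m + 1 := by exact_mod_cast h2
  omega

lemma partition_union (x : ℝ) :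
    (⋃ n : ℤ, Set.Ioc (x + 2*n - 1) (x + 2*n + 1)) = Set.univ := by
  rw [Set.eq_univ_iff_forall]
  intro u
  rw [Set.mem_iUnion]
  refine ⟨⌈(u - x - 1)/2⌉, Set.mem_Ioc.2 ⟨?_, ?_⟩⟩
  · have := Int.ceil_lt_add_one ((u - x - 1)/2); linarith
  · have := Int.le_ceil ((u - x - 1)/2); linarith

lemma cov (f : ℝ → ℝ) (hf : ContinuousOn f (Set.Icc 0 1)) (t x : ℝ) (ht : 0 < t)
    (hi : Integrable (fun u => gaussD t u * f (phi (x - u)))) (n : ℤ) :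
    ∫ u in Set.Ioc (x + 2*n - 1) (x + 2*n + 1), gaussD t u * f (phi (x - u))
      = ∫ y in Set.Ioc (0:ℝ) 1, (gaussD t (x - y + 2*n) + gaussD t (x + y + 2*n)) * f y := by
  set G := fun u => gaussD t u * f (phi (x - u)) with hG
  have hsplit : Set.Ioc (x+2*n-1) (x+2*n+1)
      = Set.Ioc (x+2*n-1) (x+2*n) ∪ Set.Ioc (x+2*n) (x+2*n+1) :=
    (Set.Ioc_union_Ioc_eq_Ioc (by linarith) (by linarith)).symm
  rw [hsplit, MeasureTheory.setIntegral_union (Set.Ioc_disjoint_Ioc_of_le le_rfl) measurableSet_Ioc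
    hi.integrableOn hi.integrableOn]
  have p1 : ∫ u in Set.Ioc (x+2*n-1) (x+2*n), G u
      = ∫ y in Set.Ioc (0:ℝ) 1, gaussD t (x - y + 2*n) * f y := by
    rw [← intervalIntegral.integral_of_le (by linarith : x+2*n-1 ≤ x+2*n),
        ← intervalIntegral.integral_of_le (by norm_num : (0:ℝ) ≤ 1)]
    have h := intervalIntegral.integral_comp_sub_left (a := 0) (b := 1) G (x + 2*n)
    simp only [sub_zero] at h
    rw [← h]
    apply intervalIntegral.integral_congr
    intro y hy
    rw [Set.uIcc_of_le (by norm_num : (0:ℝ) ≤ 1)] at hy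
    have hphi : phi (x - (x + 2*n - y)) = y := by
      rw [show x - (x + 2*(n:ℝ) - y) = y + 2*((-n : ℤ) : ℝ) by push_cast; ring,
        phi_add_two_int, phi_of_mem hy]
    simp only [hG, hphi]
    rw [show x + 2*(n:ℝ) - y = x - y + 2*n by ring]
  have p2 : ∫ u in Set.Ioc (x+2*n) (x+2*n+1), G u
      = ∫ y in Set.Ioc (0:ℝ) 1, gaussD t (x + y + 2*n) * f y := by
    rw [← intervalIntegral.integral_of_le (by linarith : x+2*n ≤ x+2*n+1),
        ← intervalIntegral.integral_of_le (by norm_num : (0:ℝ) ≤ 1)]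
    have h := intervalIntegral.integral_comp_add_right (a := 0) (b := 1) G (x + 2*n)
    simp only [zero_add] at h
    rw [show (1:ℝ) + (x + 2*n) = x + 2*n + 1 by ring] at h
    rw [← h]
    apply intervalIntegral.integral_congr
    intro y hy
    rw [Set.uIcc_of_le (by norm_num : (0:ℝ) ≤ 1)] at hy
    have hphi : phi (x - (y + (x + 2*n))) = y := by
      rw [show x - (y + (x + 2*(n:ℝ))) = -(y + 2*((n : ℤ) : ℝ)) by push_cast; ring,
        phi_neg, phi_add_two_int, phi_of_mem hy]
    simp only [hG, hphi]
    rw [show y + (x + 2*(n:ℝ)) = x + y + 2*n by ring]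
  rw [p1, p2]
  have iA : IntegrableOn (fun y => gaussD t (x - y + 2*n) * f y) (Set.Ioc (0:ℝ) 1) := by
    apply (ContinuousOn.mul ?_ hf).integrableOn_Icc.mono_set Set.Ioc_subset_Icc_self
    exact ((continuous_gaussD t).comp (by fun_prop)).continuousOn
  have iB : IntegrableOn (fun y => gaussD t (x + y + 2*n) * f y) (Set.Ioc (0:ℝ) 1) := by
    apply (ContinuousOn.mul ?_ hf).integrableOn_Icc.mono_set Set.Ioc_subset_Icc_self
    exact ((continuous_gaussD t).comp (by fun_prop)).continuousOn
  rw [← MeasureTheory.integral_add iA iB]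
  apply MeasureTheory.integral_congr_ae
  filter_upwards with y
  ring

end CoV

section Key

lemma key (f : ℝ → ℝ) (hf : ContinuousOn f (Set.Icc 0 1)) {t : ℝ} (ht : 0 < t) (x : ℝ)
    (M : ℝ) (hM : ∀ y ∈ Set.Icc (0:ℝ) 1, ‖f y‖ ≤ M) :
    ∫ y in (0:ℝ)..1, heatK t x y * f y = ∫ u, gaussD t u * f (phi (x - u)) := by
  set G := fun u => gaussD t u * f (phi (x - u)) with hGdef
  set K := fun (n : ℤ) (y : ℝ) => gaussD t (x - y + 2*(n:ℝ)) + gaussD t (x + y + 2*(n:ℝ)) with hKdef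
  have hM0 : 0 ≤ M := le_trans (norm_nonneg _) (hM 0 (by norm_num))
  have hfc : Continuous fun u => f (phi (x - u)) := by
    apply hf.comp_continuous (continuous_phi.comp (by fun_prop))
    intro u; exact phi_mem _
  have hGc : Continuous G := (continuous_gaussD t).mul hfc
  have hGi : Integrable G := by
    apply Integrable.mono' ((integrable_gaussD ht).const_mul M) hGc.aestronglyMeasurable
    filter_upwards with u
    rw [hGdef, norm_mul, Real.norm_eq_abs (gaussD t u), abs_of_nonneg (gaussD_nonneg ht u)]
    calc gaussD t u * ‖f (phi (x - u))‖ ≤ gaussD t u * M :=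
          mul_le_mul_of_nonneg_left (hM _ (phi_mem _)) (gaussD_nonneg ht u)
      _ = M * gaussD t u := mul_comm _ _
  have h1i : Integrable (fun u => gaussD t u * (1:ℝ)) := by
    simpa using integrable_gaussD ht
  have hSum : HasSum (fun n : ℤ => ∫ u in Set.Ioc (x+2*n-1) (x+2*n+1), G u) (∫ u, G u) := by
    have h := MeasureTheory.hasSum_integral_iUnion (f := G)
      (fun n : ℤ => measurableSet_Ioc) (partition_disjoint x)
      (by rw [partition_union]; exact hGi.integrableOn)
    rwa [partition_union, Measure.restrict_univ] at h
  have hSum1 : HasSum (fun n : ℤ => ∫ u in Set.Ioc (x+2*n-1) (x+2*n+1), gaussD t u * (1:ℝ))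
      (∫ u, gaussD t u * (1:ℝ)) := by
    have h := MeasureTheory.hasSum_integral_iUnion (f := fun u => gaussD t u * (1:ℝ))
      (fun n : ℤ => measurableSet_Ioc) (partition_disjoint x)
      (by rw [partition_union]; exact h1i.integrableOn)
    rwa [partition_union, Measure.restrict_univ] at h
  have hSum' : HasSum (fun n : ℤ => ∫ y in Set.Ioc (0:ℝ) 1, K n y * f y) (∫ u, G u) := by
    have e : (fun n : ℤ => ∫ u in Set.Ioc (x+2*n-1) (x+2*n+1), G u)
        = fun n : ℤ => ∫ y in Set.Ioc (0:ℝ) 1, K n y * f y :=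
      funext fun n => cov f hf t x ht hGi n
    rwa [e] at hSum
  have hcov1 : ∀ n : ℤ, ∫ u in Set.Ioc (x+2*n-1) (x+2*n+1), gaussD t u * (1:ℝ)
      = ∫ y in Set.Ioc (0:ℝ) 1, K n y * (1:ℝ) :=
    fun n => cov (fun _ => 1) continuousOn_const t x ht h1i n
  have hKc : ∀ n : ℤ, Continuous (K n) := by
    intro n
    exact ((continuous_gaussD t).comp (by fun_prop)).add ((continuous_gaussD t).comp (by fun_prop))
  have hKnonneg : ∀ (n : ℤ) (y : ℝ), 0 ≤ K n y :=
    fun n y => add_nonneg (gaussD_nonneg ht _) (gaussD_nonneg ht _)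
  have iK : ∀ n : ℤ, IntegrableOn (fun y => K n y * f y) (Set.Ioc (0:ℝ) 1) := by
    intro n
    exact (((hKc n).continuousOn).mul hf).integrableOn_Icc.mono_set Set.Ioc_subset_Icc_self
  have iK1 : ∀ n : ℤ, IntegrableOn (fun y => K n y * (1:ℝ)) (Set.Ioc (0:ℝ) 1) := by
    intro n
    simpa using ((hKc n).continuousOn.integrableOn_Icc.mono_set Set.Ioc_subset_Icc_self)
  have hsummable : Summable (fun n : ℤ => ∫ y in Set.Ioc (0:ℝ) 1, ‖K n y * f y‖) := by
    refine Summable.of_nonneg_of_le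
      (fun n => integral_nonneg (fun y => norm_nonneg _))
      (fun n => ?_) (hSum1.summable.mul_left M)
    rw [hcov1 n, ← MeasureTheory.integral_const_mul]
    apply MeasureTheory.setIntegral_mono_on (iK n).norm ((iK1 n).const_mul M) measurableSet_Ioc
    intro y hy
    rw [norm_mul, Real.norm_eq_abs (K n y), abs_of_nonneg (hKnonneg n y)]
    calc K n y * ‖f y‖ ≤ K n y * M :=
          mul_le_mul_of_nonneg_left (hM y (Set.Ioc_subset_Icc_self hy)) (hKnonneg n y)
      _ = M * (K n y * 1) := by ring
  have hswap : ∫ y in Set.Ioc (0:ℝ) 1, (∑' n : ℤ, K n y * f y)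
      = ∑' n : ℤ, ∫ y in Set.Ioc (0:ℝ) 1, K n y * f y :=
    (MeasureTheory.integral_tsum_of_summable_integral_norm iK hsummable).symm
  rw [intervalIntegral.integral_of_le (by norm_num : (0:ℝ) ≤ 1)]
  have hker : ∀ y : ℝ, heatK t x y * f y = ∑' n : ℤ, K n y * f y := by
    intro y
    rw [heatK, tsum_mul_right]
  calc ∫ y in Set.Ioc (0:ℝ) 1, heatK t x y * f y
      = ∫ y in Set.Ioc (0:ℝ) 1, (∑' n : ℤ, K n y * f y) := by
        apply MeasureTheory.integral_congr_ae
        filter_upwards with y using hker y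
    _ = ∑' n : ℤ, ∫ y in Set.Ioc (0:ℝ) 1, K n y * f y := hswap
    _ = ∫ u, G u := hSum'.tsum_eq

end Key

lemma gauss_tail {t η : ℝ} (ht : 0 < t) (hη : 0 < η) :
    ∫ u in {u : ℝ | η < |u|}, gaussD t u ≤ 2 * Real.exp (-η^2/(4*t)) := by
  set S := {u : ℝ | η < |u|} with hS
  have hSm : MeasurableSet S := (isOpen_lt continuous_const continuous_abs).measurableSet
  set c := Real.exp (-η^2/(4*t)) with hc
  have hc0 : 0 < c := Real.exp_pos _
  set B := fun u : ℝ => c * ((Real.sqrt (2*π*t))⁻¹ * Real.exp (-(4*t)⁻¹ * u^2)) with hB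
  have hBi : Integrable B :=
    ((integrable_exp_neg_mul_sq (by positivity : (0:ℝ) < (4*t)⁻¹)).const_mul _).const_mul _
  have h4 : (0:ℝ) < 4*t := by positivity
  have step1 : ∫ u in S, gaussD t u ≤ ∫ u in S, B u := by
    apply MeasureTheory.setIntegral_mono_on (integrable_gaussD ht).integrableOn hBi.integrableOn hSm
    intro u hu
    have hu' : η ≤ |u| := le_of_lt hu
    rw [gaussD_eq ht, hB]
    have hsq : η^2 ≤ u^2 := by
      calc η^2 = |η|^2 := by rw [abs_of_pos hη]
        _ ≤ |u|^2 := by apply pow_le_pow_left₀ (abs_nonneg η) ((abs_of_pos hη).le.trans hu')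
        _ = u^2 := sq_abs u
    have h1 : Real.exp (-(2*t)⁻¹ * u^2) ≤ c * Real.exp (-(4*t)⁻¹ * u^2) := by
      rw [hc, ← Real.exp_add]
      apply Real.exp_le_exp.2
      have expand : -η^2/(4*t) + -(4*t)⁻¹*u^2 - (-(2*t)⁻¹ * u^2) = (u^2 - η^2)/(4*t) := by
        field_simp; ring
      have hnn : (0:ℝ) ≤ (u^2 - η^2)/(4*t) := div_nonneg (by linarith) h4.le
      linarith
    calc (Real.sqrt (2*π*t))⁻¹ * Real.exp (-(2*t)⁻¹ * u^2)
        ≤ (Real.sqrt (2*π*t))⁻¹ * (c * Real.exp (-(4*t)⁻¹ * u^2)) :=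
          mul_le_mul_of_nonneg_left h1 (by positivity)
      _ = c * ((Real.sqrt (2*π*t))⁻¹ * Real.exp (-(4*t)⁻¹ * u^2)) := by ring
  have step2 : ∫ u in S, B u ≤ ∫ u, B u := by
    apply MeasureTheory.setIntegral_le_integral hBi
    filter_upwards with u
    rw [hB]
    positivity
  have step3 : ∫ u, B u = c * Real.sqrt 2 := by
    rw [hB]
    rw [MeasureTheory.integral_const_mul, MeasureTheory.integral_const_mul, integral_gaussian]
    congr 1
    rw [show π / (4*t)⁻¹ = 2 * (2*π*t) by field_simp; ring]
    rw [Real.sqrt_mul (by norm_num : (0:ℝ) ≤ 2)]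
    rw [mul_comm (Real.sqrt 2), ← mul_assoc, inv_mul_cancel₀ (by positivity), one_mul]
  have hsqrt2 : Real.sqrt 2 ≤ 2 := by
    nlinarith [Real.sq_sqrt (show (0:ℝ) ≤ 2 by norm_num), Real.sqrt_nonneg 2]
  calc ∫ u in S, gaussD t u ≤ c * Real.sqrt 2 := step1.trans (step2.trans_eq step3)
    _ ≤ 2 * c := by nlinarith


/-- strong continuity of the Neumann heat semigroup on `C([0,1])`:
`P_t f → f` uniformly on `[0,1]` as `t ↓ 0`. -/
theorem heat_semigroup_strong_continuity :
    ∀ f : ℝ → ℝ, ContinuousOn f (Set.Icc (0:ℝ) 1) →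
      ∀ ε > (0:ℝ), ∃ δ > (0:ℝ), ∀ t ∈ Set.Ioo (0:ℝ) δ, ∀ x ∈ Set.Icc (0:ℝ) 1,
        |Pt t f x - f x| < ε := by
  intro f hf ε hε
  obtain ⟨M, hM⟩ := isCompact_Icc.exists_bound_of_continuousOn hf
  have hM0 : 0 ≤ M := le_trans (norm_nonneg _) (hM 0 (by norm_num))
  have huc := isCompact_Icc.uniformContinuousOn_of_continuous hf
  rw [Metric.uniformContinuousOn_iff] at huc
  obtain ⟨η, hη, hmod⟩ := huc (ε/2) (by positivity)
  set c0 := min (ε/(8*(M+1))) 1 with hc0def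
  have hc00 : 0 < c0 := lt_min (by positivity) one_pos
  set s0 := -Real.log (c0/2) with hs0def
  have hs0pos : 0 < s0 := by
    rw [hs0def, neg_pos]
    apply Real.log_neg (by positivity)
    have h1 : c0 ≤ 1 := min_le_right _ _
    linarith
  have hexp : Real.exp (-s0) < ε/(8*(M+1)) := by
    rw [hs0def, neg_neg, Real.exp_log (by positivity)]
    calc c0/2 < c0 := by linarith
      _ ≤ ε/(8*(M+1)) := min_le_left _ _
  refine ⟨(η/2)^2/(4*s0), by positivity, ?_⟩
  rintro t ⟨ht0, htδ⟩ x hx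
  have hfc : Continuous fun u => f (phi (x - u)) :=
    hf.comp_continuous (continuous_phi.comp (by fun_prop)) (fun u => phi_mem _)
  set D := fun u => gaussD t u * (f (phi (x - u)) - f x) with hD
  have hDc : Continuous D := (continuous_gaussD t).mul (hfc.sub continuous_const)
  have hDbound : ∀ u, |f (phi (x - u)) - f x| ≤ 2*(M+1) := by
    intro u
    calc |f (phi (x - u)) - f x| = |f (phi (x - u)) + -(f x)| := by rw [sub_eq_add_neg]
      _ ≤ |f (phi (x - u))| + |-(f x)| := abs_add_le _ _
      _ = ‖f (phi (x - u))‖ + ‖f x‖ := by rw [abs_neg, Real.norm_eq_abs, Real.norm_eq_abs]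
      _ ≤ M + M := add_le_add (hM _ (phi_mem _)) (hM x hx)
      _ ≤ 2*(M+1) := by linarith
  have hDi : Integrable D := by
    apply Integrable.mono' ((integrable_gaussD ht0).const_mul (2*(M+1))) hDc.aestronglyMeasurable
    filter_upwards with u
    rw [hD, norm_mul, Real.norm_eq_abs (gaussD t u), abs_of_nonneg (gaussD_nonneg ht0 u),
      Real.norm_eq_abs]
    calc gaussD t u * |f (phi (x - u)) - f x| ≤ gaussD t u * (2*(M+1)) :=
          mul_le_mul_of_nonneg_left (hDbound u) (gaussD_nonneg ht0 u)
      _ = 2*(M+1) * gaussD t u := mul_comm _ _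
  have hGi : Integrable (fun u => gaussD t u * f (phi (x - u))) := by
    have h := hDi.add ((integrable_gaussD ht0).const_mul (f x))
    refine h.congr ?_
    filter_upwards with u
    simp only [hD, Pi.add_apply]
    ring
  have heq : Pt t f x - f x = ∫ u, D u := by
    rw [Pt, if_neg ht0.ne', key f hf ht0 x M hM]
    have h2 : ∫ u, D u = (∫ u, gaussD t u * f (phi (x-u))) - ∫ u, f x * gaussD t u := by
      rw [← MeasureTheory.integral_sub hGi ((integrable_gaussD ht0).const_mul (f x))]
      apply MeasureTheory.integral_congr_ae
      filter_upwards with u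
      simp only [hD]
      ring
    rw [h2, MeasureTheory.integral_const_mul, integral_gaussD ht0, mul_one]
  have habs : |∫ u, D u| ≤ ∫ u, |D u| := by
    have h := MeasureTheory.norm_integral_le_integral_norm (f := D) (μ := volume)
    simpa [Real.norm_eq_abs] using h
  set S := {u : ℝ | η/2 < |u|} with hSdef
  have hSm : MeasurableSet S := (isOpen_lt continuous_const continuous_abs).measurableSet
  have hsplit : ∫ u, |D u| = (∫ u in S, |D u|) + ∫ u in Sᶜ, |D u| :=
    (MeasureTheory.integral_add_compl hSm hDi.abs).symm
  have hS1 : ∫ u in S, |D u| ≤ (2*(M+1)) * ∫ u in S, gaussD t u := by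
    rw [← MeasureTheory.integral_const_mul]
    apply MeasureTheory.setIntegral_mono_on hDi.abs.integrableOn
      (((integrable_gaussD ht0).const_mul _).integrableOn) hSm
    intro u hu
    rw [hD, abs_mul, abs_of_nonneg (gaussD_nonneg ht0 u)]
    calc gaussD t u * |f (phi (x-u)) - f x| ≤ gaussD t u * (2*(M+1)) :=
          mul_le_mul_of_nonneg_left (hDbound u) (gaussD_nonneg ht0 u)
      _ = (2*(M+1)) * gaussD t u := mul_comm _ _
  have htail : ∫ u in S, gaussD t u ≤ 2 * Real.exp (-(η/2)^2/(4*t)) :=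
    gauss_tail ht0 (by positivity)
  have hexp2 : Real.exp (-(η/2)^2/(4*t)) < ε/(8*(M+1)) := by
    have h1 : s0 < (η/2)^2/(4*t) := by
      rw [lt_div_iff₀ (by positivity : (0:ℝ) < 4*t)]
      have h2 := (lt_div_iff₀ (by positivity : (0:ℝ) < 4*s0)).1 htδ
      calc s0 * (4*t) = t * (4*s0) := by ring
        _ < (η/2)^2 := h2
    calc Real.exp (-(η/2)^2/(4*t)) = Real.exp (-((η/2)^2/(4*t))) := by rw [neg_div]
      _ < Real.exp (-s0) := by apply Real.exp_lt_exp.2; linarith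
      _ < ε/(8*(M+1)) := hexp
  have hS1' : ∫ u in S, |D u| < ε/2 := by
    calc ∫ u in S, |D u| ≤ (2*(M+1)) * ∫ u in S, gaussD t u := hS1
      _ ≤ (2*(M+1)) * (2 * Real.exp (-(η/2)^2/(4*t))) := by
          apply mul_le_mul_of_nonneg_left htail (by positivity)
      _ < (2*(M+1)) * (2 * (ε/(8*(M+1)))) := by
          apply mul_lt_mul_of_pos_left ?_ (by positivity)
          linarith
      _ = ε/2 := by
          have hM1 : M + 1 ≠ 0 := by positivity
          field_simp
          ring
  have hS2 : ∫ u in Sᶜ, |D u| ≤ ε/2 := by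
    have hpt : ∀ u ∈ Sᶜ, |D u| ≤ (ε/2) * gaussD t u := by
      intro u hu
      rw [Set.mem_compl_iff, hSdef, Set.mem_setOf_eq, not_lt] at hu
      rw [hD, abs_mul, abs_of_nonneg (gaussD_nonneg ht0 u)]
      have hdist : dist (phi (x - u)) x < η := by
        have h1 : |phi (x-u) - phi x| ≤ |(x-u) - x| := phi_lipschitz _ _
        rw [phi_of_mem hx] at h1
        rw [Real.dist_eq]
        calc |phi (x-u) - x| ≤ |x - u - x| := h1
          _ = |u| := by rw [show x - u - x = -u by ring, abs_neg]
          _ ≤ η/2 := hu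
          _ < η := by linarith
      have hfd : |f (phi (x-u)) - f x| < ε/2 := by
        have h2 := hmod (phi (x-u)) (phi_mem _) x hx hdist
        rwa [Real.dist_eq] at h2
      calc gaussD t u * |f (phi (x-u)) - f x| ≤ gaussD t u * (ε/2) :=
            mul_le_mul_of_nonneg_left hfd.le (gaussD_nonneg ht0 u)
        _ = (ε/2) * gaussD t u := mul_comm _ _
    calc ∫ u in Sᶜ, |D u| ≤ ∫ u in Sᶜ, (ε/2) * gaussD t u :=
        MeasureTheory.setIntegral_mono_on hDi.abs.integrableOn
          ((integrable_gaussD ht0).const_mul _).integrableOn hSm.compl hpt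
      _ ≤ ∫ u, (ε/2) * gaussD t u := by
          apply MeasureTheory.setIntegral_le_integral ((integrable_gaussD ht0).const_mul _)
          filter_upwards with u
          exact mul_nonneg (by positivity) (gaussD_nonneg ht0 u)
      _ = ε/2 := by rw [MeasureTheory.integral_const_mul, integral_gaussD ht0, mul_one]
  calc |Pt t f x - f x| = |∫ u, D u| := by rw [heq]
    _ ≤ ∫ u, |D u| := habs
    _ = (∫ u in S, |D u|) + ∫ u in Sᶜ, |D u| := hsplit
    _ < ε/2 + ε/2 := add_lt_add_of_lt_of_le hS1' hS2
    _ = ε := by ring
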